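/- Let N ≥ 2 and consider the N observables on ℂ^{2^N}: P_1 = σ_X^{⊗N}, and for k = 2,…,N, P_k = the tensor product ⊗_{l=1}^N M_l where M_1 = σ_Z, M_k = σ_Z, and M_l = I for l ∉ {1,k}. Then the common +1 eigenspace {ψ : P_k ψ = ψ for all k = 1,…,N} is one-dimensional and is spanned by the GHZ state (1/√2)(|00…0⟩ + |11…1⟩). -/

import Mathlib

open Matrix Finset

/-- Tensor product of `N` 2×2 complex matrices, indexed by bit strings. -/
noncomputable def tensorN {N : ℕ} (M : Fin N → Matrix (Fin 2) (Fin 2) ℂ) :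
    Matrix (Fin N → Fin 2) (Fin N → Fin 2) ℂ :=
  fun i j => ∏ l, M l (i l) (j l)

/-- The Pauli matrix `σ_X`. -/
def sigmaX : Matrix (Fin 2) (Fin 2) ℂ := !![0, 1; 1, 0]

/-- The Pauli matrix `σ_Z`. -/
def sigmaZ : Matrix (Fin 2) (Fin 2) ℂ := !![1, 0; 0, -1]

/-- The standard GHZ state `(|0…0⟩ + |1…1⟩)/√2` in `ℂ^{2^N}`. -/
noncomputable def ghzN (N : ℕ) : (Fin N → Fin 2) → ℂ :=
  (Real.sqrt 2 : ℂ)⁻¹ • (Pi.single (fun _ => 0) 1 + Pi.single (fun _ => 1) 1)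

/-- `P 0 = σ_X^{⊗N}`; for `k ≠ 0`, `P k` has `σ_Z` on qubits `0` and `k` and `I` elsewhere. -/
noncomputable def stabP (N : ℕ) (k : Fin N) :
    Matrix (Fin N → Fin 2) (Fin N → Fin 2) ℂ :=
  if (k : ℕ) = 0 then tensorN (fun _ => sigmaX)
  else tensorN (fun l => if (l : ℕ) = 0 ∨ l = k then sigmaZ else 1)

lemma sigmaX_flip (a : Fin 2) : sigmaX a (1 - a) = 1 := by
  fin_cases a <;> simp [sigmaX]
lemma sigmaX_diag (a : Fin 2) : sigmaX a a = 0 := by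
  fin_cases a <;> simp [sigmaX]
lemma sigmaZ_off (a b : Fin 2) (h : b ≠ a) : sigmaZ a b = 0 := by
  fin_cases a <;> fin_cases b <;> simp_all [sigmaZ]
lemma sigmaZ_prod_ne (a b : Fin 2) (h : a ≠ b) : sigmaZ a a * sigmaZ b b = -1 := by
  fin_cases a <;> fin_cases b <;> simp_all [sigmaZ]
lemma sigmaZ_prod_eq (a : Fin 2) : sigmaZ a a * sigmaZ a a = 1 := by
  fin_cases a <;> norm_num [sigmaZ]
lemma fin2_cases (a : Fin 2) : a = 0 ∨ a = 1 := by fin_cases a <;> simp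
lemma fin2_flip_flip (a : Fin 2) : 1 - (1 - a) = a := by fin_cases a <;> decide
lemma fin2_eq_of_flip (a b : Fin 2) (h : 1 - a = b) : a = 1 - b := by
  rw [← h, fin2_flip_flip]
lemma fin2_of_ne_flip (a b : Fin 2) (h : b ≠ 1 - a) : b = a := by
  fin_cases a <;> fin_cases b <;> simp_all
lemma mulVec_X {N : ℕ} (ψ : (Fin N → Fin 2) → ℂ) (i : Fin N → Fin 2) :
    (tensorN (fun _ => sigmaX)).mulVec ψ i = ψ (fun l => 1 - i l) := by
  unfold tensorN Matrix.mulVec dotProduct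
  rw [Finset.sum_eq_single (fun l => 1 - i l)]
  · simp [sigmaX_flip]
  · intro j _ hj
    have : ∃ l, j l ≠ 1 - i l := by
      by_contra hc
      push_neg at hc
      exact hj (funext hc)
    obtain ⟨l, hl⟩ := this
    apply mul_eq_zero_of_left
    apply Finset.prod_eq_zero (Finset.mem_univ l)
    have h2 : j l = i l := fin2_of_ne_flip _ _ hl
    show sigmaX (i l) (j l) = 0
    rw [h2]; exact sigmaX_diag _
  · intro h; exact absurd (Finset.mem_univ _) h
lemma ghz_apply {N : ℕ} (i : Fin N → Fin 2) :
    ghzN N i = (Real.sqrt 2 : ℂ)⁻¹ *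
      ((if i = fun _ => 0 then 1 else 0) + (if i = fun _ => 1 then 1 else 0)) := by
  simp [ghzN, Pi.single_apply]
lemma mulVec_diag {N : ℕ} (hz : 0 < N) (k : Fin N) (hk : (k : ℕ) ≠ 0)
    (ψ : (Fin N → Fin 2) → ℂ) (i : Fin N → Fin 2) :
    (stabP N k).mulVec ψ i
      = sigmaZ (i ⟨0, hz⟩) (i ⟨0, hz⟩) * sigmaZ (i k) (i k) * ψ i := by
  unfold stabP
  rw [if_neg hk]
  unfold tensorN Matrix.mulVec dotProduct
  rw [Finset.sum_eq_single i]
  · congr 1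
    show (∏ l : Fin N, (if (l : ℕ) = 0 ∨ l = k then sigmaZ else 1) (i l) (i l)) = _
    rw [Finset.prod_eq_mul (⟨0, hz⟩ : Fin N) k]
    · have h1 : ((⟨0, hz⟩ : Fin N) : ℕ) = 0 := rfl
      simp [h1]
    · intro h; exact hk (by rw [← h])
    · intro c _ ⟨hc1, hc2⟩
      have : ¬((c : ℕ) = 0 ∨ c = k) := by
        push_neg
        exact ⟨fun h => hc1 (Fin.ext h), hc2⟩
      show (if (c : ℕ) = 0 ∨ c = k then sigmaZ else 1) (i c) (i c) = 1
      rw [if_neg this]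
      exact Matrix.one_apply_eq _
    · intro h; exact absurd (Finset.mem_univ _) h
    · intro h; exact absurd (Finset.mem_univ _) h
  · intro j _ hj
    have : ∃ l, j l ≠ i l := by
      by_contra hc; push_neg at hc; exact hj (funext hc)
    obtain ⟨l, hl⟩ := this
    apply mul_eq_zero_of_left
    apply Finset.prod_eq_zero (Finset.mem_univ l)
    show (if (l : ℕ) = 0 ∨ l = k then sigmaZ else 1) (i l) (j l) = 0
    by_cases hc : (l : ℕ) = 0 ∨ l = k
    · rw [if_pos hc]; exact sigmaZ_off _ _ hl
    · rw [if_neg hc]; exact Matrix.one_apply_ne' hl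
  · intro h; exact absurd (Finset.mem_univ _) h

theorem stmt16 (N : ℕ) (hN : 2 ≤ N) :
    {ψ : (Fin N → Fin 2) → ℂ | ∀ k : Fin N, (stabP N k).mulVec ψ = ψ}
      = ↑(Submodule.span ℂ {ghzN N}) := by
  have hz : 0 < N := by omega
  have hsq : (Real.sqrt 2 : ℂ) ≠ 0 := by
    simp [Complex.ofReal_ne_zero]
  have hz0 : ((⟨0, hz⟩ : Fin N) : ℕ) = 0 := rfl
  have hstab0 : stabP N ⟨0, hz⟩ = tensorN (fun _ => sigmaX) := by
    unfold stabP; rw [if_pos hz0]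
  have hne01 : (fun _ : Fin N => (0 : Fin 2)) ≠ fun _ => 1 := by
    intro h
    exact absurd (congrFun h ⟨0, hz⟩) (by decide)
  have hflip0 : ∀ i : Fin N → Fin 2,
      ((fun l => 1 - i l) = fun _ : Fin N => (0 : Fin 2)) ↔ i = fun _ => 1 := by
    intro i
    constructor <;> intro h <;> funext l <;> have h2 := congrFun h l
    · simpa [fin2_eq_of_flip _ _ h2] using rfl
    · simp [h2]
  have hflip1 : ∀ i : Fin N → Fin 2,
      ((fun l => 1 - i l) = fun _ : Fin N => (1 : Fin 2)) ↔ i = fun _ => 0 := by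
    intro i
    constructor <;> intro h <;> funext l <;> have h2 := congrFun h l
    · simpa [fin2_eq_of_flip _ _ h2] using rfl
    · simp [h2]
  ext ψ
  simp only [Set.mem_setOf_eq, SetLike.mem_coe, Submodule.mem_span_singleton]
  constructor
  · intro h
    -- ψ vanishes on non-constant strings
    have hvanish : ∀ i : Fin N → Fin 2, (i ≠ fun _ => 0) → (i ≠ fun _ => 1) → ψ i = 0 := by
      intro i h0 h1
      have : ∃ l, i l ≠ i ⟨0, hz⟩ := by
        by_contra hc
        push_neg at hc
        rcases fin2_cases (i ⟨0, hz⟩) with hv | hv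
        · exact h0 (funext fun l => by rw [hc l, hv])
        · exact h1 (funext fun l => by rw [hc l, hv])
      obtain ⟨l, hl⟩ := this
      have hlk : (l : ℕ) ≠ 0 := by
        intro hc
        exact hl (by congr 1; exact Fin.ext hc)
      have heq := congrFun (h l) i
      rw [mulVec_diag hz l hlk ψ i] at heq
      rw [sigmaZ_prod_ne _ _ (Ne.symm hl)] at heq
      linear_combination (-1/2 : ℂ) * heq
    have hswap : ψ (fun _ => 1) = ψ (fun _ => 0) := by
      have heq := congrFun (h ⟨0, hz⟩) (fun _ => 0)
      rw [hstab0, mulVec_X] at heq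
      simpa using heq
    refine ⟨(Real.sqrt 2 : ℂ) * ψ (fun _ => 0), ?_⟩
    funext i
    simp only [Pi.smul_apply, smul_eq_mul, ghz_apply]
    by_cases h0 : i = fun _ => 0
    · subst h0
      rw [if_pos rfl, if_neg hne01]
      field_simp
      ring
    · by_cases h1 : i = fun _ => 1
      · subst h1
        rw [if_neg (Ne.symm hne01), if_pos rfl, hswap]
        field_simp
        ring
      · rw [if_neg h0, if_neg h1, hvanish i h0 h1]
        ring
  · rintro ⟨c, rfl⟩
    intro k
    rw [Matrix.mulVec_smul]
    congr 1
    funext i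
    by_cases hk : (k : ℕ) = 0
    · have : k = ⟨0, hz⟩ := Fin.ext hk
      subst this
      rw [hstab0, mulVec_X]
      rw [ghz_apply, ghz_apply]
      rw [if_congr (hflip0 i) rfl rfl, if_congr (hflip1 i) rfl rfl]
      ring
    · rw [mulVec_diag hz k hk]
      by_cases h0 : i = fun _ => 0
      · subst h0
        rw [sigmaZ_prod_eq]
        ring
      · by_cases h1 : i = fun _ => 1
        · subst h1
          rw [sigmaZ_prod_eq]
          ring
        · have : ghzN N i = 0 := by
            rw [ghz_apply, if_neg h0, if_neg h1]; ring
          rw [this]; ring
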